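/- Let A be a finitely generated unital *-algebra over ℂ with ordered generating set (s₁,…,s_n), and fix k ∈ ℕ. Identify the set V_k of unital *-homomorphisms A → M_k(ℂ) with a subset of M_k(ℂ)ⁿ. Then the subset V_k^sur ⊆ V_k of surjective *-homomorphisms is open in the Zariski topology (as a real algebraic variety), and in particular open in the Euclidean topology. -/

import Mathlib

open Matrix MvPolynomial

namespace SHZO

variable {n k : ℕ}

abbrev Mk (k : ℕ) := Matrix (Fin k) (Fin k) ℂ

noncomputable def coords (T : Fin n → Mk k) : Fin n × Fin k × Fin k × Fin 2 → ℝ :=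
  fun x => if x.2.2.2 = 0 then (T x.1 x.2.1 x.2.2.1).re else (T x.1 x.2.1 x.2.2.1).im

def gen (T : Fin n → Mk k) : Fin n × Bool → Mk k :=
  fun j => if j.2 then star (T j.1) else T j.1

def IsCPoly (f : (Fin n → Mk k) → ℂ) : Prop :=
  ∃ p q : MvPolynomial (Fin n × Fin k × Fin k × Fin 2) ℝ,
    ∀ T, f T = (eval (coords T) p : ℝ) + (eval (coords T) q : ℝ) * Complex.I

lemma IsCPoly.const (z : ℂ) : IsCPoly (n := n) (k := k) (fun _ => z) :=
  ⟨C z.re, C z.im, fun T => by simp [Complex.ext_iff]⟩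

lemma IsCPoly.add {f g : (Fin n → Mk k) → ℂ} (hf : IsCPoly f) (hg : IsCPoly g) :
    IsCPoly (fun T => f T + g T) := by
  obtain ⟨p, q, hp⟩ := hf; obtain ⟨p', q', hp'⟩ := hg
  exact ⟨p + p', q + q', fun T => by simp only [hp, hp', map_add]; push_cast; ring⟩

lemma IsCPoly.mul {f g : (Fin n → Mk k) → ℂ} (hf : IsCPoly f) (hg : IsCPoly g) :
    IsCPoly (fun T => f T * g T) := by
  obtain ⟨p, q, hp⟩ := hf; obtain ⟨p', q', hp'⟩ := hg
  refine ⟨p * p' - q * q', p * q' + q * p', fun T => ?_⟩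
  simp only [hp, hp', map_sub, map_add, _root_.map_mul]
  push_cast
  ring_nf
  simp [Complex.I_sq]
  ring

lemma IsCPoly.conj {f : (Fin n → Mk k) → ℂ} (hf : IsCPoly f) :
    IsCPoly (fun T => (starRingEnd ℂ) (f T)) := by
  obtain ⟨p, q, hp⟩ := hf
  exact ⟨p, -q, fun T => by simp [hp, Complex.ext_iff]⟩

lemma IsCPoly.sum {ι : Type*} (s : Finset ι) (f : ι → (Fin n → Mk k) → ℂ)
    (hf : ∀ i ∈ s, IsCPoly (f i)) : IsCPoly (fun T => ∑ i ∈ s, f i T) := by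
  classical
  induction s using Finset.induction_on with
  | empty => simpa using IsCPoly.const 0
  | insert a s' hx ih =>
    simp only [Finset.sum_insert hx]
    exact (hf a (Finset.mem_insert_self a s')).add
      (ih fun i hi => hf i (Finset.mem_insert_of_mem hi))

lemma IsCPoly.prod {ι : Type*} (s : Finset ι) (f : ι → (Fin n → Mk k) → ℂ)
    (hf : ∀ i ∈ s, IsCPoly (f i)) : IsCPoly (fun T => ∏ i ∈ s, f i T) := by
  classical
  induction s using Finset.induction_on with
  | empty => simpa using IsCPoly.const 1
  | insert a s' hx ih =>
    simp only [Finset.prod_insert hx]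
    exact (hf a (Finset.mem_insert_self a s')).mul
      (ih fun i hi => hf i (Finset.mem_insert_of_mem hi))

lemma isCPoly_entry (j : Fin n) (a b : Fin k) :
    IsCPoly (fun T : Fin n → Mk k => T j a b) := by
  refine ⟨X (j, a, b, 0), X (j, a, b, 1), fun T => ?_⟩
  simp [coords, Complex.ext_iff]

lemma isCPoly_gen (j : Fin n × Bool) (a b : Fin k) :
    IsCPoly (fun T : Fin n → Mk k => gen T j a b) := by
  rcases j with ⟨j, bb⟩
  cases bb
  · simpa [gen] using isCPoly_entry j a b
  · simpa [gen, Matrix.star_apply] using (isCPoly_entry j b a).conj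

lemma isCPoly_listProd (l : List (Fin n × Bool)) (a b : Fin k) :
    IsCPoly (fun T : Fin n → Mk k => ((l.map (gen T)).prod) a b) := by
  induction l generalizing a b with
  | nil =>
    simp only [List.map_nil, List.prod_nil]
    by_cases h : a = b
    · simpa [Matrix.one_apply, h] using IsCPoly.const (n := n) (k := k) 1
    · simpa [Matrix.one_apply, h] using IsCPoly.const (n := n) (k := k) 0
  | cons j l ih =>
    simp only [List.map_cons, List.prod_cons, Matrix.mul_apply]
    exact IsCPoly.sum _ _ fun c _ => (isCPoly_gen j a c).mul (ih c b)


/-- Words of length at most `k*k` in the letters `Fin n × Bool`. -/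
abbrev Word (n k : ℕ) := Σ d : Fin (k * k + 1), (Fin (d : ℕ) → Fin n × Bool)

noncomputable def wEval (T : Fin n → Mk k) (w : Word n k) : Mk k :=
  (((List.ofFn w.2).map (gen T)).prod)

noncomputable def Amat (T : Fin n → Mk k) : Matrix (Fin k × Fin k) (Word n k) ℂ :=
  fun a w => wEval T w a.1 a.2

noncomputable def detf (T : Fin n → Mk k) : ℂ :=
  (Amat T * (Amat T)ᴴ).det

lemma isCPoly_detf : IsCPoly (detf (n := n) (k := k)) := by
  classical
  have hA : ∀ (a : Fin k × Fin k) (w : Word n k), IsCPoly (fun T => Amat T a w) :=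
    fun a w => isCPoly_listProd _ _ _
  have hB : ∀ a b : Fin k × Fin k, IsCPoly (fun T : Fin n → Mk k => (Amat T * (Amat T)ᴴ) a b) := by
    intro a b
    simp only [Matrix.mul_apply, Matrix.conjTranspose_apply, Matrix.star_apply]
    exact IsCPoly.sum _ _ fun w _ => (hA a w).mul (hA b w).conj
  have : IsCPoly (fun T : Fin n → Mk k => ∑ σ : Equiv.Perm (Fin k × Fin k),
      ((Equiv.Perm.sign σ : ℤ) : ℂ) * ∏ i, (Amat T * (Amat T)ᴴ) (σ i) i) := by
    refine IsCPoly.sum _ _ fun σ _ => (IsCPoly.const _).mul ?_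
    exact IsCPoly.prod _ _ fun i _ => hB (σ i) i
  convert this using 2 with T
  simp only [detf]
  rw [Matrix.det_apply]
  simp [Units.smul_def, zsmul_eq_mul]

/-- The key rank equivalence. -/
lemma span_top_iff_detf (T : Fin n → Mk k) :
    Submodule.span ℂ (Set.range (wEval T)) = ⊤ ↔ detf T ≠ 0 := by
  classical
  open ComplexOrder in
  set A := Amat T with hA
  -- the linear equivalence between matrices and functions on pairs
  let e : Mk k ≃ₗ[ℂ] ((Fin k × Fin k) → ℂ) :=
    { toFun := fun M a => M a.1 a.2
      invFun := fun v => Matrix.of fun i j => v (i, j)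
      map_add' := fun M N => rfl
      map_smul' := fun c M => rfl
      left_inv := fun M => rfl
      right_inv := fun v => rfl }
  have he : e '' Set.range (wEval T) = Set.range Aᵀ := by
    ext v
    constructor
    · rintro ⟨m, ⟨w, rfl⟩, rfl⟩; exact ⟨w, rfl⟩
    · rintro ⟨w, rfl⟩; exact ⟨wEval T w, ⟨w, rfl⟩, rfl⟩
  have step1 : Submodule.span ℂ (Set.range (wEval T)) = ⊤ ↔
      Submodule.span ℂ (Set.range Aᵀ) = ⊤ := by
    rw [← he, ← LinearEquiv.coe_coe, ← Submodule.map_span]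
    constructor
    · intro h; rw [h, Submodule.map_top]
      exact LinearMap.range_eq_top.mpr e.surjective
    · intro h
      apply Submodule.map_injective_of_injective e.injective
      rw [h, Submodule.map_top]
      exact (LinearMap.range_eq_top.mpr e.surjective).symm
  rw [step1]
  change Submodule.span ℂ (Set.range (Matrix.col A)) = ⊤ ↔ _
  rw [← Matrix.range_mulVecLin, LinearMap.range_eq_top]
  have hmv : ∀ x, A.mulVecLin x = A.mulVec x := fun _ => rfl
  have hdetf : detf T = (A * Aᴴ).det := rfl
  constructor
  · intro hsurj
    -- A * Aᴴ is injective, hence a unit, hence det ≠ 0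
    have hinj : Function.Injective (A * Aᴴ).mulVec := by
      have h0 : ∀ x, (A * Aᴴ) *ᵥ x = 0 → x = 0 := by
        intro x hx
        have h1 : star (Aᴴ *ᵥ x) ⬝ᵥ (Aᴴ *ᵥ x) = 0 := by
          rw [Matrix.star_mulVec, Matrix.conjTranspose_conjTranspose,
            ← Matrix.dotProduct_mulVec, Matrix.mulVec_mulVec, hx, dotProduct_zero]
        have h2 : Aᴴ *ᵥ x = 0 := dotProduct_star_self_eq_zero.mp h1
        obtain ⟨y, hy⟩ := hsurj x
        have h4 : star x ⬝ᵥ (A *ᵥ y) = 0 := by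
          rw [Matrix.dotProduct_mulVec]
          have h5 : star x ᵥ* A = star (Aᴴ *ᵥ x) := by
            rw [Matrix.star_mulVec, Matrix.conjTranspose_conjTranspose]
          rw [h5, h2, star_zero, zero_dotProduct]
        have h6 : A *ᵥ y = x := by rw [← hmv, hy]
        rw [h6] at h4
        exact dotProduct_star_self_eq_zero.mp h4
      intro x y hxy
      have hz : (A * Aᴴ) *ᵥ (x - y) = 0 := by
        rw [Matrix.mulVec_sub, hxy, sub_self]
      exact sub_eq_zero.mp (h0 _ hz)
    have hu : IsUnit (A * Aᴴ) := Matrix.mulVec_injective_iff_isUnit.mp hinj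
    rw [hdetf]
    exact ((Matrix.isUnit_iff_isUnit_det _).mp hu).ne_zero
  · intro hdet y
    have hu : IsUnit (A * Aᴴ) :=
      (Matrix.isUnit_iff_isUnit_det _).mpr (isUnit_iff_ne_zero.mpr (hdetf ▸ hdet))
    obtain ⟨x, hx⟩ := Matrix.mulVec_surjective_iff_isUnit.mpr hu y
    exact ⟨Aᴴ *ᵥ x, by rw [hmv, Matrix.mulVec_mulVec]; exact hx⟩


section Filtration

variable (T : Fin n → Mk k)

/-- Products of at most `d` generators. -/
def Ld (d : ℕ) : Set (Mk k) :=
  {x | ∃ l : List (Fin n × Bool), l.length ≤ d ∧ (l.map (gen T)).prod = x}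

noncomputable def fsp (d : ℕ) : Submodule ℂ (Mk k) := Submodule.span ℂ (Ld T d)

lemma Ld_mono : Monotone (Ld T) := fun _ _ hab _ => fun ⟨l, hl, he⟩ => ⟨l, hl.trans hab, he⟩

lemma fsp_mono : Monotone (fsp T) := fun _ _ hab => Submodule.span_mono (Ld_mono T hab)

lemma fsp_step (d : ℕ) (h : fsp T (d + 1) ≤ fsp T d) : fsp T (d + 2) ≤ fsp T (d + 1) := by
  rw [fsp, Submodule.span_le]
  rintro x ⟨l, hl, rfl⟩
  cases l with
  | nil => exact Submodule.subset_span ⟨[], by simp, rfl⟩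
  | cons j l' =>
    have hy : (l'.map (gen T)).prod ∈ fsp T d := by
      refine h (Submodule.subset_span ⟨l', ?_, rfl⟩)
      simpa using Nat.succ_le_succ_iff.mp (by simpa using hl)
    have hmm := Submodule.mem_map_of_mem (f := LinearMap.mulLeft ℂ (gen T j)) hy
    rw [fsp, Submodule.map_span] at hmm
    have hsub : (LinearMap.mulLeft ℂ (gen T j)) '' (Ld T d) ⊆ Ld T (d + 1) := by
      rintro _ ⟨y, ⟨l'', hl'', rfl⟩, rfl⟩
      exact ⟨j :: l'', by simpa using hl'', by simp⟩
    have := Submodule.span_mono hsub hmm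
    simpa [fsp, List.map_cons, List.prod_cons, LinearMap.mulLeft_apply] using this

lemma fsp_stab (d : ℕ) (h : fsp T (d + 1) ≤ fsp T d) : ∀ e, fsp T (d + e) ≤ fsp T d := by
  have H : ∀ e, fsp T (d + e + 1) ≤ fsp T (d + e) := by
    intro e
    induction e with
    | zero => simpa using h
    | succ e ih =>
      have := fsp_step T (d + e) ih
      have heq : d + (e + 1) + 1 = d + e + 2 := by ring
      have heq2 : d + (e + 1) = d + e + 1 := by ring
      rw [heq, heq2]
      exact this
  intro e
  induction e with
  | zero => simp
  | succ e ih =>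
    have heq : d + (e + 1) = d + e + 1 := by ring
    rw [heq]
    exact (H e).trans ih

lemma exists_fsp_stab : ∃ d, d ≤ k * k ∧ fsp T (d + 1) ≤ fsp T d := by
  by_contra hcon
  push_neg at hcon
  have hlt : ∀ d, d ≤ k * k → fsp T d < fsp T (d + 1) :=
    fun d hd => lt_of_le_not_ge (fsp_mono T (Nat.le_succ d)) (hcon d hd)
  have hrank : ∀ d, d ≤ k * k + 1 → d ≤ Module.finrank ℂ (fsp T d) := by
    intro d
    induction d with
    | zero => intro _; exact Nat.zero_le _
    | succ d ih =>
      intro hd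
      have hd' : d ≤ k * k := Nat.succ_le_succ_iff.mp hd
      have h1 := ih (hd'.trans (Nat.le_succ _))
      have h2 := Submodule.finrank_lt_finrank_of_lt (hlt d hd')
      omega
  have h1 := hrank (k * k + 1) le_rfl
  have h2 : Module.finrank ℂ (fsp T (k * k + 1)) ≤ Module.finrank ℂ (Mk k) :=
    Submodule.finrank_le _
  have h3 : Module.finrank ℂ (Mk k) = k * k := by
    rw [Module.finrank_matrix]
    simp [Module.finrank_self]
  omega

lemma fsp_le_top : ∀ e, fsp T e ≤ fsp T (k * k) := by
  obtain ⟨d, hd, hstab⟩ := exists_fsp_stab T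
  intro e
  by_cases he : e ≤ k * k
  · exact fsp_mono T he
  · have he' : d ≤ e := hd.trans (le_of_lt (not_le.mp he))
    have := fsp_stab T d hstab (e - d)
    rw [Nat.add_sub_cancel' he'] at this
    exact this.trans (fsp_mono T hd)

lemma range_wEval_eq : Set.range (wEval T) = Ld T (k * k) := by
  ext x
  constructor
  · rintro ⟨⟨d, g⟩, rfl⟩
    exact ⟨List.ofFn g, by simpa using Fin.is_le d, rfl⟩
  · rintro ⟨l, hl, rfl⟩
    refine ⟨⟨⟨l.length, Nat.lt_succ_of_le hl⟩, fun i => l.get i⟩, ?_⟩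
    show ((List.ofFn (l.get)).map (gen T)).prod = _
    rw [List.ofFn_get]

lemma closure_subset_fsp :
    (Submonoid.closure (Set.range (gen T)) : Set (Mk k)) ⊆ fsp T (k * k) := by
  intro x hx
  obtain ⟨l, hl, rfl⟩ := Submonoid.exists_list_of_mem_closure hx
  have : ∃ l' : List (Fin n × Bool), l'.map (gen T) = l := by
    clear hx
    induction l with
    | nil => exact ⟨[], rfl⟩
    | cons a l ih =>
      obtain ⟨j, hj⟩ := hl a List.mem_cons_self
      obtain ⟨l', hl'⟩ := ih (fun y hy => hl y (List.mem_cons_of_mem _ hy))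
      exact ⟨j :: l', by simp [hj, hl']⟩
  obtain ⟨l', rfl⟩ := this
  have hmem : ((l'.map (gen T))).prod ∈ fsp T l'.length :=
    Submodule.subset_span ⟨l', le_rfl, rfl⟩
  exact fsp_le_top T _ hmem

lemma adjoin_top_iff :
    StarAlgebra.adjoin ℂ (Set.range T) = ⊤ ↔
      Submodule.span ℂ (Set.range (wEval T)) = ⊤ := by
  have hG : Set.range T ∪ star (Set.range T) = Set.range (gen T) := by
    ext x
    constructor
    · rintro (⟨j, rfl⟩ | hx)
      · exact ⟨(j, false), rfl⟩
      · obtain ⟨j, hj⟩ : ∃ j, T j = star x := Set.mem_star.mp hx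
        exact ⟨(j, true), by simp [gen, hj]⟩
    · rintro ⟨⟨j, b⟩, rfl⟩
      cases b
      · exact Or.inl ⟨j, rfl⟩
      · refine Or.inr (Set.mem_star.mpr ⟨j, ?_⟩)
        simp [gen]
  have hmemiff : ∀ x : Mk k, x ∈ StarAlgebra.adjoin ℂ (Set.range T) ↔
      x ∈ Submodule.span ℂ
        ((Submonoid.closure (Set.range (gen T)) : Submonoid (Mk k)) : Set (Mk k)) := by
    intro x
    rw [← StarSubalgebra.mem_toSubalgebra, StarAlgebra.adjoin_toSubalgebra, hG,
      ← Subalgebra.mem_toSubmodule, Algebra.adjoin_eq_span]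
  have hspan_eq : Submodule.span ℂ
      ((Submonoid.closure (Set.range (gen T)) : Submonoid (Mk k)) : Set (Mk k)) =
      Submodule.span ℂ (Set.range (wEval T)) := by
    apply le_antisymm
    · rw [Submodule.span_le]
      intro x hx
      have h1 := closure_subset_fsp T hx
      rwa [fsp, ← range_wEval_eq] at h1
    · rw [Submodule.span_le]
      rintro _ ⟨w, rfl⟩
      apply Submodule.subset_span
      apply Submonoid.list_prod_mem
      intro y hy
      rw [List.mem_map] at hy
      obtain ⟨j, -, rfl⟩ := hy
      exact Submonoid.subset_closure ⟨j, rfl⟩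
  constructor
  · intro h
    rw [← hspan_eq, Submodule.eq_top_iff']
    intro x
    exact (hmemiff x).mp (by rw [h]; trivial)
  · intro h
    rw [eq_top_iff]
    intro x _
    exact (hmemiff x).mpr (by rw [hspan_eq, h]; trivial)

end Filtration

lemma surj_char {A : Type*} [Ring A] [StarRing A] [Algebra ℂ A] [StarModule ℂ A]
    (s : Fin n → A) (hgen : StarAlgebra.adjoin ℂ (Set.range s) = ⊤)
    (T : Fin n → Mk k) (φ : A →⋆ₐ[ℂ] Mk k) (hφ : ∀ i, φ (s i) = T i) :
    Function.Surjective φ ↔ StarAlgebra.adjoin ℂ (Set.range T) = ⊤ := by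
  have himg : φ '' Set.range s = Set.range T := by
    rw [← Set.range_comp]
    exact congrArg Set.range (funext hφ)
  have hmap : StarSubalgebra.map φ (StarAlgebra.adjoin ℂ (Set.range s)) =
      StarAlgebra.adjoin ℂ (Set.range T) := by
    rw [StarAlgHom.map_adjoin, himg]
  rw [hgen] at hmap
  constructor
  · intro hs
    rw [← hmap, eq_top_iff]
    intro x _
    obtain ⟨y, rfl⟩ := hs x
    exact ⟨y, trivial, rfl⟩
  · intro h x
    have hx : x ∈ StarSubalgebra.map φ ⊤ := by rw [hmap, h]; trivial
    obtain ⟨y, -, rfl⟩ := hx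
    exact ⟨y, rfl⟩

end SHZO


/-- Let `A` be a finitely generated unital *-algebra over `ℂ` with
ordered generating set `(s₁, …, s_n)`, and fix `k`. Identify the set `V_k` of unital
*-homomorphisms `A → M_k(ℂ)` with a subset of `M_k(ℂ)ⁿ` (a homomorphism corresponds to the
tuple of images of the generators). Then the subset `V_k^sur ⊆ V_k` of surjective
*-homomorphisms is Zariski-open in `V_k` (as a real algebraic variety): it is the
non-vanishing locus in `V_k` of finitely many real polynomials in the real and imaginary
parts of the matrix entries. In particular it is open in `V_k` for the Euclidean topology. -/
theorem surjective_homs_zariski_open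
    {A : Type*} [Ring A] [StarRing A] [Algebra ℂ A] [StarModule ℂ A]
    {n : ℕ} (s : Fin n → A) (hgen : StarAlgebra.adjoin ℂ (Set.range s) = ⊤)
    (k : ℕ) :
    ∀ Vk Vsur : Set (Fin n → Matrix (Fin k) (Fin k) ℂ),
      Vk = {T | ∃ φ : A →⋆ₐ[ℂ] Matrix (Fin k) (Fin k) ℂ, ∀ i, φ (s i) = T i} →
      Vsur = {T | ∃ φ : A →⋆ₐ[ℂ] Matrix (Fin k) (Fin k) ℂ,
          Function.Surjective φ ∧ ∀ i, φ (s i) = T i} →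
      (∃ Pset : Finset (MvPolynomial (Fin n × Fin k × Fin k × Fin 2) ℝ),
          Vsur = {T ∈ Vk | ∃ p ∈ Pset,
            MvPolynomial.eval
              (fun x : Fin n × Fin k × Fin k × Fin 2 =>
                if x.2.2.2 = 0 then (T x.1 x.2.1 x.2.2.1).re else (T x.1 x.2.1 x.2.2.1).im)
              p ≠ 0}) ∧
      IsOpen {T : Vk | (T : Fin n → Matrix (Fin k) (Fin k) ℂ) ∈ Vsur} := by
  classical
  intro Vk Vsur hVk hVsur
  obtain ⟨p, q, hpq⟩ := SHZO.isCPoly_detf (n := n) (k := k)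
  -- membership characterization
  have key : ∀ T, T ∈ Vsur ↔ T ∈ Vk ∧ SHZO.detf T ≠ 0 := by
    intro T
    constructor
    · intro h
      rw [hVsur] at h
      obtain ⟨φ, hs, hφ⟩ := h
      refine ⟨by rw [hVk]; exact ⟨φ, hφ⟩, ?_⟩
      rw [← SHZO.span_top_iff_detf, ← SHZO.adjoin_top_iff]
      exact (SHZO.surj_char s hgen T φ hφ).mp hs
    · rintro ⟨hT, hd⟩
      rw [hVk] at hT
      obtain ⟨φ, hφ⟩ := hT
      rw [hVsur]
      exact ⟨φ, (SHZO.surj_char s hgen T φ hφ).mpr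
        ((SHZO.adjoin_top_iff T).mpr ((SHZO.span_top_iff_detf T).mpr hd)), hφ⟩
  have hdet_iff : ∀ T, SHZO.detf T ≠ 0 ↔
      (MvPolynomial.eval (SHZO.coords T) p ≠ 0 ∨ MvPolynomial.eval (SHZO.coords T) q ≠ 0) := by
    intro T
    rw [hpq T]
    constructor
    · intro h
      by_contra hc
      push_neg at hc
      apply h
      rw [hc.1, hc.2]
      simp
    · rintro h hz
      have hre := congrArg Complex.re hz
      have him := congrArg Complex.im hz
      simp at hre him
      rcases h with h | h <;> [exact h hre; exact h him]
  constructor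
  · refine ⟨{p, q}, ?_⟩
    ext T
    have hco : (fun x : Fin n × Fin k × Fin k × Fin 2 =>
        if x.2.2.2 = 0 then (T x.1 x.2.1 x.2.2.1).re else (T x.1 x.2.1 x.2.2.1).im)
        = SHZO.coords T := rfl
    simp only [Set.mem_setOf_eq, Finset.mem_insert, Finset.mem_singleton, hco]
    rw [key T, hdet_iff T]
    constructor
    · rintro ⟨h1, h2 | h2⟩
      · exact ⟨h1, p, Or.inl rfl, h2⟩
      · exact ⟨h1, q, Or.inr rfl, h2⟩
    · rintro ⟨h1, r, (rfl | rfl), hr⟩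
      · exact ⟨h1, Or.inl hr⟩
      · exact ⟨h1, Or.inr hr⟩
  · -- openness
    have hc : Continuous (SHZO.coords (n := n) (k := k)) := by
      apply continuous_pi
      intro x
      by_cases h : x.2.2.2 = 0 <;> simp only [SHZO.coords, h, if_true, if_false] <;>
        fun_prop
    have hcont : Continuous (SHZO.detf (n := n) (k := k)) := by
      have hfe : SHZO.detf (n := n) (k := k) = fun T =>
          ((MvPolynomial.eval (SHZO.coords T) p : ℝ) : ℂ) +
            ((MvPolynomial.eval (SHZO.coords T) q : ℝ) : ℂ) * Complex.I :=
        funext hpq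
      rw [hfe]
      have h1 : Continuous fun T : Fin n → SHZO.Mk k => MvPolynomial.eval (SHZO.coords T) p :=
        (MvPolynomial.continuous_eval p).comp hc
      have h2 : Continuous fun T : Fin n → SHZO.Mk k => MvPolynomial.eval (SHZO.coords T) q :=
        (MvPolynomial.continuous_eval q).comp hc
      exact (Complex.continuous_ofReal.comp h1).add
        ((Complex.continuous_ofReal.comp h2).mul continuous_const)
    have hopen : IsOpen {T : Fin n → SHZO.Mk k | SHZO.detf T ≠ 0} :=
      isOpen_compl_singleton.preimage hcont
    have hset : {T : Vk | (T : Fin n → Matrix (Fin k) (Fin k) ℂ) ∈ Vsur}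
        = Subtype.val ⁻¹' {T : Fin n → SHZO.Mk k | SHZO.detf T ≠ 0} := by
      ext T
      simp only [Set.mem_setOf_eq, Set.mem_preimage]
      rw [key (T : Fin n → SHZO.Mk k)]
      exact and_iff_right T.2
    rw [hset]
    exact hopen.preimage continuous_subtype_val
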